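/- Let p be a prime with p ≡ 1 (mod q), and let n > q with base-p digit sum α_p(n) ≤ q. Then p divides C(n, qk) for every k with 0 < qk < n. -/

import Mathlib

lemma sum_digits_pos (p m : ℕ) (hm : m ≠ 0) : 0 < (Nat.digits p m).sum := by
  rcases Nat.eq_zero_or_pos (Nat.digits p m).sum with h | h
  · exfalso
    have hnil : Nat.digits p m ≠ [] := Nat.digits_ne_nil_iff_ne_zero.mpr hm
    have hlast := Nat.getLast_digit_ne_zero p hm
    have hmem : (Nat.digits p m).getLast hnil ∈ Nat.digits p m := List.getLast_mem hnil
    have := List.single_le_sum (fun x _ => Nat.zero_le x) _ hmem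
    omega
  · exact h

theorem stmt_12 (n q p : ℕ) (hq : 0 < q) (hn : q < n) (hp : p.Prime)
    (hcong : p % q = 1 % q) (hα : (Nat.digits p n).sum ≤ q) :
    ∀ k : ℕ, 0 < q * k → q * k < n → p ∣ Nat.choose n (q * k) := by
  intro k hk1 hk2
  by_contra hdvd
  haveI : Fact p.Prime := ⟨hp⟩
  set m := q * k with hm
  have hv : padicValNat p (Nat.choose n m) = 0 := padicValNat.eq_zero_of_not_dvd hdvd
  have hkum := sub_one_mul_padicValNat_choose_eq_sub_sum_digits (p := p) (k := m) (n := n)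
    (le_of_lt hk2)
  rw [hv, mul_zero] at hkum
  -- so (digits p m).sum + (digits p (n-m)).sum ≤ (digits p n).sum
  have hsub : (p.digits m).sum + (p.digits (n - m)).sum ≤ (p.digits n).sum := by omega
  -- q divides digit sum of m
  have hqm : (p.digits m).sum ≥ q := by
    rcases eq_or_lt_of_le (show 1 ≤ q from hq) with h1 | h1
    · have := sum_digits_pos p m (by omega); omega
    · -- q ≥ 2, so 1 % q = 1
      have h1q : 1 % q = 1 := Nat.mod_eq_of_lt h1
      have hmod : m ≡ (p.digits m).sum [MOD q] :=
        Nat.modEq_digits_sum q p (hcong.trans h1q) m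
      have hdvdq : q ∣ (p.digits m).sum := by
        have : (0 : ℕ) ≡ (p.digits m).sum [MOD q] :=
          (Nat.modEq_zero_iff_dvd.mpr ⟨k, rfl⟩).symm.trans hmod
        exact (Nat.modEq_zero_iff_dvd.mp this.symm)
      have hpos := sum_digits_pos p m (by omega)
      exact Nat.le_of_dvd hpos hdvdq
  have hpos2 := sum_digits_pos p (n - m) (by omega)
  omega
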